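/- Non-containment of G-orbits through 2Ω∖Ω̄ in X_{ℂ,2Ω}: for every φ ∈ ℝ with π/4 < |φ| < π/2 there exists a continuous map γ : [0,1] → SL(2,ℝ) with γ(0) the identity matrix such that the function σ(s) = trace( γ(s) · diag(e^{2iφ}, e^{−2iφ}) · γ(s)ᵀ ) is real-valued for every s ∈ [0,1], is strictly decreasing on [0,1], takes values in [−2, 2], and satisfies σ(1) = −2. In particular there exists g ∈ SL(2,ℝ) with trace( g · diag(e^{2iφ}, e^{−2iφ}) · gᵀ ) = −2, so the SL(2,ℝ)-orbit of diag(e^{2iφ}, e^{−2iφ}) is not contained in {z ∈ Sym(2,ℂ) : det z = 1, trace z ∉ (−∞, −2]}. -/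

import Mathlib

open Real Matrix

/-- The point `g·diag(e^{2iφ}, e^{-2iφ})·gᵀ` of the `SL(2,ℝ)`-orbit of
`exp(iφ diag(1,-1))·x₀` in the symmetric-matrix model `X_ℂ = {z ∈ Sym(2,ℂ) : det z = 1}`. -/
noncomputable def orbPt (g : Matrix (Fin 2) (Fin 2) ℝ) (φ : ℝ) : Matrix (Fin 2) (Fin 2) ℂ :=
  (g.map Complex.ofReal) *
    Matrix.diagonal ![Complex.exp (2 * φ * Complex.I), Complex.exp (-(2 * φ) * Complex.I)] *
    (g.map Complex.ofReal)ᵀ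

lemma trace_orbPt (g : Matrix (Fin 2) (Fin 2) ℝ) (φ : ℝ) :
    Matrix.trace (orbPt g φ) =
      ((g 0 0 ^ 2 + g 1 0 ^ 2 : ℝ) : ℂ) * Complex.exp (2 * φ * Complex.I)
        + ((g 0 1 ^ 2 + g 1 1 ^ 2 : ℝ) : ℂ) * Complex.exp (-(2 * φ) * Complex.I) := by
  simp [orbPt, Matrix.trace_fin_two, Matrix.mul_apply, Fin.sum_univ_two, Matrix.diagonal,
    Matrix.map_apply]
  ring

lemma trace_curve (a φ : ℝ) :
    Matrix.trace (orbPt !![Real.cosh a, Real.sinh a; Real.sinh a, Real.cosh a] φ) =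
      ((Real.cosh (2 * a) * (2 * Real.cos (2 * φ)) : ℝ) : ℂ) := by
  rw [trace_orbPt]
  simp only [Matrix.cons_val', Matrix.cons_val_zero, Matrix.cons_val_one, Matrix.head_cons,
    Matrix.empty_val', Matrix.cons_val_fin_one, Matrix.head_fin_const, Matrix.of_apply]
  rw [Complex.exp_mul_I, Complex.exp_mul_I, Real.cosh_two_mul]
  push_cast [Complex.cos_neg, Complex.sin_neg]
  ring

theorem orbit_leaves_XC_two_Omega (φ : ℝ) (h1 : π / 4 < |φ|) (h2 : |φ| < π / 2) :
    (∃ γ : ℝ → Matrix (Fin 2) (Fin 2) ℝ, Continuous γ ∧ γ 0 = 1 ∧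
      (∀ s ∈ Set.Icc (0 : ℝ) 1, (γ s).det = 1) ∧
      (∀ s ∈ Set.Icc (0 : ℝ) 1, (Matrix.trace (orbPt (γ s) φ)).im = 0) ∧
      StrictAntiOn (fun s => (Matrix.trace (orbPt (γ s) φ)).re) (Set.Icc (0 : ℝ) 1) ∧
      (∀ s ∈ Set.Icc (0 : ℝ) 1,
        (Matrix.trace (orbPt (γ s) φ)).re ∈ Set.Icc (-2 : ℝ) 2) ∧
      Matrix.trace (orbPt (γ 1) φ) = -2) ∧
    (∃ g : Matrix.SpecialLinearGroup (Fin 2) ℝ,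
      Matrix.trace (orbPt (g : Matrix (Fin 2) (Fin 2) ℝ) φ) = -2) ∧
    ¬ ({z : Matrix (Fin 2) (Fin 2) ℂ | ∃ g : Matrix.SpecialLinearGroup (Fin 2) ℝ,
          z = orbPt (g : Matrix (Fin 2) (Fin 2) ℝ) φ} ⊆
        {z : Matrix (Fin 2) (Fin 2) ℂ | zᵀ = z ∧ z.det = 1 ∧
          ¬ ((Matrix.trace z).im = 0 ∧ (Matrix.trace z).re ≤ -2)}) := by
  -- basic facts about K := cos (2φ)
  set K := Real.cos (2 * φ) with hKdef
  have habs : Real.cos (2 * |φ|) = K := by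
    rw [hKdef]
    rcases abs_cases φ with ⟨h, _⟩ | ⟨h, _⟩
    · rw [h]
    · rw [h]; ring_nf; rw [Real.cos_neg]
  have hKneg : K < 0 := by
    rw [← habs]
    apply Real.cos_neg_of_pi_div_two_lt_of_lt
    · linarith
    · linarith [Real.pi_pos]
  have hKgt : -1 < K := by
    rw [← habs]
    have := Real.cos_lt_cos_of_nonneg_of_le_pi (x := 2 * |φ|) (y := π)
      (by positivity) le_rfl (by linarith)
    rw [Real.cos_pi] at this
    linarith
  set t : ℝ := 1 / (-K) with htdef
  have ht1 : 1 < t := one_lt_one_div (by linarith) (by linarith)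
  have htK : t * (2 * K) = -2 := by
    rw [htdef, div_mul_eq_mul_div, one_mul, div_eq_iff (neg_ne_zero.mpr hKneg.ne)]
    ring
  set u : ℝ := Real.sqrt (t ^ 2 - 1) with hudef
  have hu0 : 0 < u := Real.sqrt_pos.2 (by nlinarith)
  set r : ℝ := Real.arsinh u / 2 with hrdef
  have hr0 : 0 < r := by
    have := Real.arsinh_pos_iff.2 hu0
    positivity
  have hcosh2r : Real.cosh (2 * r) = t := by
    rw [hrdef]
    have : 2 * (Real.arsinh u / 2) = Real.arsinh u := by ring
    rw [this, Real.cosh_arsinh, hudef, Real.sq_sqrt (by nlinarith),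
      show 1 + (t ^ 2 - 1) = t ^ 2 by ring, Real.sqrt_sq (by linarith)]
  -- the curve
  set γ : ℝ → Matrix (Fin 2) (Fin 2) ℝ :=
    fun s => !![Real.cosh (r * s), Real.sinh (r * s);
                Real.sinh (r * s), Real.cosh (r * s)] with hγ
  have htr : ∀ s : ℝ, Matrix.trace (orbPt (γ s) φ) =
      ((Real.cosh (2 * (r * s)) * (2 * K) : ℝ) : ℂ) := fun s => trace_curve (r * s) φ
  have hdet : ∀ s : ℝ, (γ s).det = 1 := by
    intro s
    simp only [hγ, Matrix.det_fin_two_of]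
    nlinarith [Real.cosh_sq_sub_sinh_sq (r * s)]
  have hγ1 : Matrix.trace (orbPt (γ 1) φ) = -2 := by
    rw [htr 1]
    norm_num [hcosh2r, htK]
  refine ⟨⟨γ, ?_, ?_, fun s _ => hdet s, ?_, ?_, ?_, hγ1⟩, ?_, ?_⟩
  · -- continuity
    apply continuous_matrix
    intro i j
    fin_cases i <;> fin_cases j <;>
      simp only [hγ, Matrix.cons_val', Matrix.cons_val_zero, Matrix.cons_val_one,
        Matrix.head_cons, Matrix.empty_val', Matrix.cons_val_fin_one, Matrix.head_fin_const,
        Matrix.of_apply, Fin.mk_zero, Fin.mk_one] <;> fun_prop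
  · -- γ 0 = 1
    simp [hγ, Matrix.one_fin_two]
  · -- trace is real
    intro s _
    rw [htr s]
    exact Complex.ofReal_im _
  · -- strictly decreasing
    intro s1 hs1 s2 hs2 h12
    simp only [htr, Complex.ofReal_re]
    have hn1 : (0:ℝ) ≤ 2 * (r * s1) := mul_nonneg (by norm_num) (mul_nonneg hr0.le hs1.1)
    have hn2 : (0:ℝ) ≤ 2 * (r * s2) := mul_nonneg (by norm_num) (mul_nonneg hr0.le hs2.1)
    have hch : Real.cosh (2 * (r * s1)) < Real.cosh (2 * (r * s2)) := by
      rw [Real.cosh_lt_cosh, abs_of_nonneg hn1, abs_of_nonneg hn2]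
      nlinarith [hs1.1, hs1.2]
    nlinarith
  · -- values in [-2, 2]
    intro s hs
    rw [htr s]
    simp only [Complex.ofReal_re, Set.mem_Icc]
    have h1c : 1 ≤ Real.cosh (2 * (r * s)) := Real.one_le_cosh _
    have h2c : Real.cosh (2 * (r * s)) ≤ t := by
      rw [← hcosh2r, Real.cosh_le_cosh,
        abs_of_nonneg (by positivity : (0:ℝ) ≤ 2 * r),
        abs_of_nonneg (mul_nonneg (by norm_num) (mul_nonneg hr0.le hs.1))]
      nlinarith [hs.1, hs.2]
    constructor
    · nlinarith
    · nlinarith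
  · -- existence of g
    exact ⟨⟨γ 1, hdet 1⟩, hγ1⟩
  · -- non-containment
    intro hsub
    have hz : orbPt (γ 1) φ ∈ {z : Matrix (Fin 2) (Fin 2) ℂ |
        ∃ g : Matrix.SpecialLinearGroup (Fin 2) ℝ,
          z = orbPt (g : Matrix (Fin 2) (Fin 2) ℝ) φ} := ⟨⟨γ 1, hdet 1⟩, rfl⟩
    obtain ⟨-, -, hbad⟩ := hsub hz
    apply hbad
    rw [hγ1]
    norm_num
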